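/- For a connected graph G on {0,...,n}, let Π_G = {(x_1,...,x_n) ∈ R^n : |x_i - x_j| ≤ 1 for all edges (i,j) of G, with convention x_0 = 0}. Then n! · Vol(Π_G) equals the number of pairs (h,σ) with h ∈ Z^n and σ a permutation of [n] such that π(h,σ) ⊆ Π_G. -/

import Mathlib

open scoped Classical
open MeasureTheory

noncomputable section

/-- Extension of a vector `(x_1, …, x_n)` to `(x_0, x_1, …, x_n)` with `x_0 = 0`. -/
def extv {α : Type*} [Zero α] {n : ℕ} (x : Fin n → α) : Fin (n + 1) → α :=
  Fin.cases 0 x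

/-- The polytope `Π_G = {(x_1,…,x_n) : x_0 = 0 and |x_i - x_j| ≤ 1 for all edges (i,j) of G}`
associated with a graph `G` on `{0, …, n}`. -/
def PiG (n : ℕ) (G : SimpleGraph (Fin (n + 1))) : Set (Fin n → ℝ) :=
  {x | ∀ i j : Fin (n + 1), G.Adj i j → |extv x i - extv x j| ≤ 1}

/-- The polytope `π(h, σ)`: the closure of the set of points `(x_1, …, x_n)` whose integer
parts are prescribed by `h` and whose fractional parts are positive and increase in the
order prescribed by `σ`. -/
def piPoly (n : ℕ) (h : Fin n → ℤ) (σ : Equiv.Perm (Fin n)) : Set (Fin n → ℝ) :=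
  closure {x : Fin n → ℝ | (∀ i, ⌊x i⌋ = h i) ∧ (∀ k, 0 < Int.fract (x (σ⁻¹ k))) ∧
    StrictMono fun k => Int.fract (x (σ⁻¹ k))}

/-- The centroid `h̄` of `h ∈ ℤ^n`: `h̄_i = h_i + i/(n+1)`, with the convention `h_0 = 0`. -/
def cent (n : ℕ) (h : Fin n → ℤ) : Fin (n + 1) → ℝ :=
  fun i => (extv h i : ℤ) + (i : ℝ) / (n + 1)

/-- The graph `G_h` on `{0, …, n}` whose edges are the pairs `(i,j)` with `|h̄_i - h̄_j| < 1`. -/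
def Gh (n : ℕ) (h : Fin n → ℤ) : SimpleGraph (Fin (n + 1)) where
  Adj i j := i ≠ j ∧ |cent n h i - cent n h j| < 1
  symm := ⟨fun i j hij => ⟨hij.1.symm, by rw [abs_sub_comm]; exact hij.2⟩⟩
  loopless := ⟨fun i hi => hi.1 rfl⟩

end

namespace StanleyAux

open Set

variable {n : ℕ}

/-- The open simplex underlying `piPoly`. -/
def Sset (n : ℕ) (h : Fin n → ℤ) (σ : Equiv.Perm (Fin n)) : Set (Fin n → ℝ) :=
  {x : Fin n → ℝ | (∀ i, ⌊x i⌋ = h i) ∧ (∀ k, 0 < Int.fract (x (σ⁻¹ k))) ∧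
    StrictMono fun k => Int.fract (x (σ⁻¹ k))}

lemma piPoly_eq (h : Fin n → ℤ) (σ : Equiv.Perm (Fin n)) :
    piPoly n h σ = closure (Sset n h σ) := rfl

@[simp] lemma extv_zero {α : Type*} [Zero α] (x : Fin n → α) : extv x 0 = 0 := rfl

@[simp] lemma extv_succ {α : Type*} [Zero α] (x : Fin n → α) (i : Fin n) :
    extv x i.succ = x i := by simp [extv]

lemma continuous_extv (i : Fin (n + 1)) :
    Continuous (fun x : Fin n → ℝ => extv x i) := by
  induction i using Fin.cases with
  | zero => simpa using continuous_const
  | succ j => simpa using continuous_apply j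

lemma isClosed_PiG (G : SimpleGraph (Fin (n + 1))) : IsClosed (PiG n G) := by
  have : PiG n G = ⋂ (i : Fin (n+1)), ⋂ (j : Fin (n+1)), ⋂ (_ : G.Adj i j),
      {x : Fin n → ℝ | |extv x i - extv x j| ≤ 1} := by
    ext x; simp [PiG]
  rw [this]
  refine isClosed_iInter fun i => isClosed_iInter fun j => isClosed_iInter fun _ => ?_
  exact isClosed_le (((continuous_extv i).sub (continuous_extv j)).abs) continuous_const

lemma measurableSet_Sset (h : Fin n → ℤ) (σ : Equiv.Perm (Fin n)) :
    MeasurableSet (Sset n h σ) := by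
  have h1 : MeasurableSet {x : Fin n → ℝ | ∀ i, ⌊x i⌋ = h i} := by
    rw [Set.setOf_forall]
    refine MeasurableSet.iInter fun i => ?_
    exact (measurable_pi_apply i).floor (measurableSet_singleton (h i))
  have h2 : MeasurableSet {x : Fin n → ℝ | ∀ k, 0 < Int.fract (x (σ⁻¹ k))} := by
    rw [Set.setOf_forall]
    refine MeasurableSet.iInter fun k => ?_
    exact measurableSet_lt measurable_const ((measurable_pi_apply (σ⁻¹ k)).fract)
  have h3 : MeasurableSet {x : Fin n → ℝ | StrictMono fun k => Int.fract (x (σ⁻¹ k))} := by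
    have : {x : Fin n → ℝ | StrictMono fun k => Int.fract (x (σ⁻¹ k))}
        = ⋂ (k : Fin n), ⋂ (l : Fin n), ⋂ (_ : k < l),
          {x : Fin n → ℝ | Int.fract (x (σ⁻¹ k)) < Int.fract (x (σ⁻¹ l))} := by
      ext x
      simp only [mem_setOf_eq, mem_iInter]
      exact ⟨fun H k l hkl => H hkl, fun H a b hab => H a b hab⟩
    rw [this]
    refine MeasurableSet.iInter fun k => MeasurableSet.iInter fun l =>
      MeasurableSet.iInter fun _ => ?_
    exact measurableSet_lt ((measurable_pi_apply (σ⁻¹ k)).fract)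
      ((measurable_pi_apply (σ⁻¹ l)).fract)
  exact (h1.inter (h2.inter h3)).congr (by ext x; simp [Sset, mem_inter_iff, and_assoc])

lemma Sset_disjoint : Pairwise fun p q : (Fin n → ℤ) × Equiv.Perm (Fin n) =>
    Disjoint (Sset n p.1 p.2) (Sset n q.1 q.2) := by
  intro p q hpq
  rw [Set.disjoint_left]
  intro x hx hx'
  apply hpq
  obtain ⟨hf1, _, hm1⟩ := hx
  obtain ⟨hf2, _, hm2⟩ := hx'
  have hh : p.1 = q.1 := by funext i; rw [← hf1 i, hf2 i]
  haveI : WellFoundedLT (Fin n) := inferInstance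
  have hg : (fun k => Int.fract (x (p.2⁻¹ k))) = fun k => Int.fract (x (q.2⁻¹ k)) := by
    refine (hm1.range_inj hm2).1 ?_
    have e1 : range (fun k => Int.fract (x (p.2⁻¹ k))) = range fun i => Int.fract (x i) :=
      Function.Surjective.range_comp p.2⁻¹.surjective fun i => Int.fract (x i)
    have e2 : range (fun k => Int.fract (x (q.2⁻¹ k))) = range fun i => Int.fract (x i) :=
      Function.Surjective.range_comp q.2⁻¹.surjective fun i => Int.fract (x i)
    rw [e1, e2]
  have hinj : Function.Injective fun i => Int.fract (x i) := by
    have : Function.Injective fun k => Int.fract (x (p.2⁻¹ k)) := hm1.injective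
    intro a b hab
    have := @this (p.2 a) (p.2 b) (by simpa using hab)
    exact p.2.injective this
  have hinv : p.2⁻¹ = q.2⁻¹ := Equiv.ext fun k => hinj (congrFun hg k)
  exact Prod.ext hh (inv_injective hinv)

end StanleyAux

namespace StanleyAux
open Set
variable {n : ℕ}

lemma Sset_translate (h : Fin n → ℤ) (σ : Equiv.Perm (Fin n)) :
    Sset n h σ = (fun x : Fin n → ℝ => x + fun i => -(h i : ℝ)) ⁻¹' Sset n 0 σ := by
  ext x
  have hf : ∀ i, ⌊x i + -(h i : ℝ)⌋ = ⌊x i⌋ - h i := fun i => by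
    rw [← sub_eq_add_neg, Int.floor_sub_intCast]
  have hfr : ∀ i, Int.fract (x i + -(h i : ℝ)) = Int.fract (x i) := fun i => by
    rw [← sub_eq_add_neg, Int.fract_sub_intCast]
  simp only [Sset, mem_preimage, mem_setOf_eq, Pi.add_apply, hf, hfr, Pi.zero_apply,
    sub_eq_zero]

lemma volume_Sset_perm (σ : Equiv.Perm (Fin n)) :
    volume (Sset n 0 σ) = volume (Sset n 0 1) := by
  have hΦ : ∀ x : Fin n → ℝ, (MeasurableEquiv.piCongrLeft (fun _ : Fin n => ℝ) (σ : Fin n ≃ Fin n)) x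
      = fun b => x (σ⁻¹ b) := by
    intro x; funext b
    rw [MeasurableEquiv.coe_piCongrLeft]
    have h1 := Equiv.piCongrLeft_apply_apply (fun _ : Fin n => ℝ) (σ : Fin n ≃ Fin n) x (σ⁻¹ b)
    simpa using h1
  have hset : (MeasurableEquiv.piCongrLeft (fun _ : Fin n => ℝ) (σ : Fin n ≃ Fin n)) ⁻¹' Sset n 0 1
      = Sset n 0 σ := by
    ext x
    simp only [mem_preimage, hΦ, Sset, mem_setOf_eq, inv_one, Equiv.Perm.coe_one, id_eq,
      Pi.zero_apply]
    constructor
    · rintro ⟨h1, h2, h3⟩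
      exact ⟨fun i => by simpa using h1 (σ i), h2, h3⟩
    · rintro ⟨h1, h2, h3⟩
      exact ⟨fun i => h1 _, h2, h3⟩
  rw [← hset]
  exact (volume_measurePreserving_piCongrLeft (fun _ : Fin n => ℝ)
    (σ : Fin n ≃ Fin n)).measure_preimage (measurableSet_Sset 0 1).nullMeasurableSet

lemma volume_Sset (h : Fin n → ℤ) (σ : Equiv.Perm (Fin n)) :
    volume (Sset n h σ) = volume (Sset n 0 1) := by
  rw [Sset_translate h σ, measure_preimage_add_right, volume_Sset_perm]

lemma volume_eq_single (i : Fin n) (c : ℝ) : volume {x : Fin n → ℝ | x i = c} = 0 := by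
  have hs : {x : Fin n → ℝ | x i = c} = Set.pi univ (fun j => if j = i then {c} else univ) := by
    ext x
    simp only [mem_setOf_eq, mem_pi, mem_univ, forall_true_left]
    constructor
    · intro hx j
      by_cases hj : j = i
      · subst hj; simp [hx]
      · simp [hj]
    · intro hx
      have := hx i
      simpa using this
  rw [hs, volume_pi_pi]
  refine Finset.prod_eq_zero (Finset.mem_univ i) ?_
  simp

lemma volume_eq_diff (i j : Fin n) (hij : i ≠ j) (c : ℝ) :
    volume {x : Fin n → ℝ | x i - x j = c} = 0 := by
  set L : (Fin n → ℝ) →ₗ[ℝ] ℝ := (LinearMap.proj i : (Fin n → ℝ) →ₗ[ℝ] ℝ) - (LinearMap.proj j : (Fin n → ℝ) →ₗ[ℝ] ℝ) with hL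
  have hker : volume {x : Fin n → ℝ | x i - x j = 0} = 0 := by
    have hs : {x : Fin n → ℝ | x i - x j = 0} = (LinearMap.ker L : Set (Fin n → ℝ)) := by
      ext x
      simp [hL, LinearMap.mem_ker, LinearMap.sub_apply, LinearMap.proj_apply, sub_eq_zero]
    have hne : LinearMap.ker L ≠ ⊤ := by
      intro htop
      have h1 : L (Pi.single i (1 : ℝ)) = 0 := by
        rw [← LinearMap.mem_ker, htop]; exact Submodule.mem_top
      rw [hL] at h1
      simp [LinearMap.sub_apply, LinearMap.proj_apply, Pi.single_apply, Ne.symm hij] at h1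
    rw [hs]
    exact Measure.addHaar_submodule volume _ hne
  have htrans : {x : Fin n → ℝ | x i - x j = c}
      = (fun x : Fin n → ℝ => x + Pi.single i (-c)) ⁻¹' {x : Fin n → ℝ | x i - x j = 0} := by
    ext x
    simp only [mem_preimage, mem_setOf_eq, Pi.add_apply]
    rw [Pi.single_eq_same, Pi.single_eq_of_ne (Ne.symm hij)]
    constructor <;> intro hh <;> linarith
  rw [htrans, measure_preimage_add_right]
  exact hker

/-- The "bad" null set. -/
def Nbad (n : ℕ) : Set (Fin n → ℝ) :=
  {x | (∃ i, Int.fract (x i) = 0) ∨ ∃ i j, i ≠ j ∧ Int.fract (x i) = Int.fract (x j)}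

lemma volume_Nbad : volume (Nbad n) = 0 := by
  have hsub : Nbad n ⊆ (⋃ (i : Fin n), ⋃ (m : ℤ), {x : Fin n → ℝ | x i = m})
      ∪ ⋃ (i : Fin n), ⋃ (j : Fin n), ⋃ (_ : i ≠ j), ⋃ (m : ℤ),
        {x : Fin n → ℝ | x i - x j = m} := by
    rintro x (⟨i, hi⟩ | ⟨i, j, hij, hfr⟩)
    · left
      refine mem_iUnion.2 ⟨i, mem_iUnion.2 ⟨⌊x i⌋, ?_⟩⟩
      have h2 := Int.floor_add_fract (x i)
      rw [hi, add_zero] at h2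
      exact h2.symm
    · right
      obtain ⟨m, hm⟩ := Int.fract_eq_fract.1 hfr
      exact mem_iUnion.2 ⟨i, mem_iUnion.2 ⟨j, mem_iUnion.2 ⟨hij, mem_iUnion.2 ⟨m, hm⟩⟩⟩⟩
  refine measure_mono_null hsub (measure_union_null ?_ ?_)
  · exact measure_iUnion_null fun i => measure_iUnion_null fun m => volume_eq_single i m
  · exact measure_iUnion_null fun i => measure_iUnion_null fun j => measure_iUnion_null
      fun hij => measure_iUnion_null fun m => volume_eq_diff i j hij m

lemma mem_Sset_of_not_bad {x : Fin n → ℝ} (hx : x ∉ Nbad n) :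
    x ∈ Sset n (fun i => ⌊x i⌋) (Tuple.sort fun i => Int.fract (x i))⁻¹ := by
  set g := fun i => Int.fract (x i) with hg
  have h1 : ∀ i, g i ≠ 0 := fun i hi => hx (Or.inl ⟨i, hi⟩)
  have hinj : Function.Injective g := by
    intro a b hab
    by_contra hne
    exact hx (Or.inr ⟨a, b, hne, hab⟩)
  refine ⟨fun i => rfl, fun k => lt_of_le_of_ne (Int.fract_nonneg _) (Ne.symm (h1 _)), ?_⟩
  simp only [inv_inv]
  exact (Tuple.monotone_sort g).strictMono_of_injective
    (hinj.comp (Tuple.sort g).injective)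

lemma key_interval (c : ℤ) {t t' : ℝ} (ht0 : 0 < t) (ht1 : t < 1) (ht0' : 0 < t')
    (ht1' : t' < 1) (hb : |(c : ℝ) + t| ≤ 1) : |(c : ℝ) + t'| ≤ 1 := by
  rw [abs_le] at hb ⊢
  have hc1 : (c : ℝ) < 1 := by linarith [hb.2]
  have hc2 : (-2 : ℝ) < c := by linarith [hb.1]
  have hc1' : c < 1 := by exact_mod_cast hc1
  have hc2' : (-2 : ℤ) < c := by exact_mod_cast hc2
  have hle : c ≤ 0 := by omega
  have hge : (-1 : ℤ) ≤ c := by omega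
  have hleR : (c : ℝ) ≤ 0 := by exact_mod_cast hle
  have hgeR : (-1 : ℝ) ≤ c := by exact_mod_cast hge
  constructor <;> linarith

lemma fract_mem (h : Fin n → ℤ) (σ : Equiv.Perm (Fin n)) {x : Fin n → ℝ}
    (hx : x ∈ Sset n h σ) (i : Fin n) :
    0 < Int.fract (x i) ∧ Int.fract (x i) < 1 := by
  refine ⟨?_, Int.fract_lt_one _⟩
  have := hx.2.1 (σ i)
  simpa using this

lemma fract_lt (h : Fin n → ℤ) (σ : Equiv.Perm (Fin n)) {x : Fin n → ℝ}
    (hx : x ∈ Sset n h σ) {i j : Fin n} (hij : σ i < σ j) :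
    Int.fract (x i) < Int.fract (x j) := by
  have := hx.2.2 hij
  simpa using this

lemma eq_floor_add (h : Fin n → ℤ) (σ : Equiv.Perm (Fin n)) {x : Fin n → ℝ}
    (hx : x ∈ Sset n h σ) (i : Fin n) : x i = (h i : ℝ) + Int.fract (x i) := by
  conv_lhs => rw [← Int.floor_add_fract (x i)]
  rw [hx.1 i]

lemma all_or_nothing {G : SimpleGraph (Fin (n + 1))} {h : Fin n → ℤ} {σ : Equiv.Perm (Fin n)}
    {x y : Fin n → ℝ} (hx : x ∈ Sset n h σ) (hy : y ∈ Sset n h σ) (hxG : x ∈ PiG n G) :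
    y ∈ PiG n G := by
  have main : ∀ i j : Fin n, σ j < σ i → |x i - x j| ≤ 1 → |y i - y j| ≤ 1 := by
    intro i j hlt hb
    have htx : x i - x j = ((h i - h j : ℤ) : ℝ) + (Int.fract (x i) - Int.fract (x j)) := by
      conv_lhs => rw [eq_floor_add h σ hx i, eq_floor_add h σ hx j]
      push_cast; ring
    have hty : y i - y j = ((h i - h j : ℤ) : ℝ) + (Int.fract (y i) - Int.fract (y j)) := by
      conv_lhs => rw [eq_floor_add h σ hy i, eq_floor_add h σ hy j]
      push_cast; ring
    rw [hty]
    rw [htx] at hb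
    refine key_interval (h i - h j) ?_ ?_ ?_ ?_ hb
    · linarith [fract_lt h σ hx hlt]
    · linarith [(fract_mem h σ hx i).2, (fract_mem h σ hx j).1]
    · linarith [fract_lt h σ hy hlt]
    · linarith [(fract_mem h σ hy i).2, (fract_mem h σ hy j).1]
  have main0 : ∀ i : Fin n, |x i| ≤ 1 → |y i| ≤ 1 := by
    intro i hb
    rw [eq_floor_add h σ hy i]
    rw [eq_floor_add h σ hx i] at hb
    exact key_interval (h i) (fract_mem h σ hx i).1 (fract_mem h σ hx i).2
      (fract_mem h σ hy i).1 (fract_mem h σ hy i).2 hb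
  intro a b hadj
  have hab := hxG a b hadj
  have hne : a ≠ b := hadj.ne
  rcases Fin.eq_zero_or_eq_succ a with rfl | ⟨a', rfl⟩ <;>
    rcases Fin.eq_zero_or_eq_succ b with rfl | ⟨b', rfl⟩
  · exact absurd rfl hne
  · simp only [extv_zero, extv_succ, zero_sub, abs_neg] at hab ⊢
    exact main0 b' hab
  · simp only [extv_zero, extv_succ, sub_zero] at hab ⊢
    exact main0 a' hab
  · simp only [extv_succ] at hab ⊢
    have hne' : a' ≠ b' := fun hh => hne (by rw [hh])
    rcases lt_or_gt_of_ne (fun hh : σ a' = σ b' => hne' (σ.injective hh)) with hlt | hlt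
    · rw [abs_sub_comm] at hab ⊢
      exact main b' a' hlt hab
    · exact main a' b' hlt hab

end StanleyAux

namespace StanleyAux
open Set
variable {n : ℕ}

lemma walk_bound {G : SimpleGraph (Fin (n + 1))} {x : Fin n → ℝ} (hx : x ∈ PiG n G)
    {a b : Fin (n + 1)} (w : G.Walk a b) : |extv x a - extv x b| ≤ w.length := by
  induction w with
  | nil => simp
  | @cons u v w hadj p ih =>
    have h1 := hx _ _ hadj
    have h2 := abs_sub_le (extv x u) (extv x v) (extv x w)
    simp only [SimpleGraph.Walk.length_cons]
    push_cast
    linarith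

lemma abs_le_of_mem {G : SimpleGraph (Fin (n + 1))} (hG : G.Connected) {x : Fin n → ℝ}
    (hx : x ∈ PiG n G) (i : Fin (n + 1)) : |extv x i| ≤ n := by
  obtain ⟨w⟩ := hG.preconnected 0 i
  let p := w.toPath
  have hlen : (p.1 : G.Walk 0 i).length < Fintype.card (Fin (n + 1)) := p.2.length_lt
  have hb := walk_bound hx (p.1 : G.Walk 0 i)
  simp only [extv_zero, zero_sub, abs_neg] at hb
  have hlen' : ((p.1 : G.Walk 0 i).length : ℝ) ≤ n := by
    rw [Fintype.card_fin] at hlen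
    exact_mod_cast Nat.lt_succ_iff.mp hlen
  linarith

lemma volume_PiG_lt_top {G : SimpleGraph (Fin (n + 1))} (hG : G.Connected) :
    volume (PiG n G) < ⊤ := by
  have hsub : PiG n G ⊆ Set.pi univ (fun _ : Fin n => Icc (-(n : ℝ)) n) := by
    intro x hx i _
    have h1 := abs_le_of_mem hG hx i.succ
    rw [extv_succ] at h1
    rw [mem_Icc]
    exact abs_le.1 h1
  refine lt_of_le_of_lt (measure_mono hsub) ?_
  rw [volume_pi_pi]
  refine ENNReal.prod_lt_top fun i _ => ?_
  simp [Real.volume_Icc]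

lemma factorial_mul_v :
    (n.factorial : ENNReal) * volume (Sset n 0 1) = 1 := by
  have hQ : volume {x : Fin n → ℝ | ∀ i, ⌊x i⌋ = (0 : ℤ)} = 1 := by
    have hs : {x : Fin n → ℝ | ∀ i, ⌊x i⌋ = (0 : ℤ)}
        = Set.pi univ (fun _ : Fin n => Ico (0 : ℝ) 1) := by
      ext x
      simp [Int.floor_eq_zero_iff]
    rw [hs, volume_pi_pi]
    simp [Real.volume_Ico]
  have hdisj : Pairwise fun σ τ : Equiv.Perm (Fin n) => Disjoint (Sset n 0 σ) (Sset n 0 τ) :=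
    fun σ τ hne => Sset_disjoint (show ((0 : Fin n → ℤ), σ) ≠ ((0 : Fin n → ℤ), τ) by
      simpa using hne)
  have hU : volume (⋃ σ : Equiv.Perm (Fin n), Sset n 0 σ)
      = (n.factorial : ENNReal) * volume (Sset n 0 1) := by
    rw [measure_iUnion hdisj fun σ => measurableSet_Sset 0 σ]
    calc ∑' σ : Equiv.Perm (Fin n), volume (Sset n 0 σ)
        = ∑' _ : Equiv.Perm (Fin n), volume (Sset n 0 1) :=
          tsum_congr fun σ => volume_Sset 0 σ
      _ = (Fintype.card (Equiv.Perm (Fin n))) * volume (Sset n 0 1) := by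
          rw [tsum_fintype, Finset.sum_const, Finset.card_univ, nsmul_eq_mul]
      _ = (n.factorial : ENNReal) * volume (Sset n 0 1) := by
          rw [Fintype.card_perm, Fintype.card_fin]
  have h1 : {x : Fin n → ℝ | ∀ i, ⌊x i⌋ = (0 : ℤ)}
      ⊆ Nbad n ∪ ⋃ σ : Equiv.Perm (Fin n), Sset n 0 σ := by
    intro x hxQ
    by_cases hxN : x ∈ Nbad n
    · exact Or.inl hxN
    · right
      have hmem := mem_Sset_of_not_bad hxN
      have hz : (fun i => ⌊x i⌋) = (0 : Fin n → ℤ) := funext fun i => hxQ i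
      rw [hz] at hmem
      exact mem_iUnion.2 ⟨_, hmem⟩
  have h2 : (⋃ σ : Equiv.Perm (Fin n), Sset n 0 σ)
      ⊆ {x : Fin n → ℝ | ∀ i, ⌊x i⌋ = (0 : ℤ)} := by
    intro x hx
    obtain ⟨σ, hσ⟩ := mem_iUnion.1 hx
    exact fun i => hσ.1 i
  have hle1 : (1 : ENNReal) ≤ (n.factorial : ENNReal) * volume (Sset n 0 1) := by
    calc (1 : ENNReal) = volume {x : Fin n → ℝ | ∀ i, ⌊x i⌋ = (0 : ℤ)} := hQ.symm
      _ ≤ volume (Nbad n ∪ ⋃ σ : Equiv.Perm (Fin n), Sset n 0 σ) := measure_mono h1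
      _ ≤ volume (Nbad n) + volume (⋃ σ : Equiv.Perm (Fin n), Sset n 0 σ) :=
          measure_union_le _ _
      _ = (n.factorial : ENNReal) * volume (Sset n 0 1) := by
          rw [volume_Nbad, zero_add, hU]
  have hle2 : (n.factorial : ENNReal) * volume (Sset n 0 1) ≤ 1 := by
    rw [← hU, ← hQ]
    exact measure_mono h2
  exact le_antisymm hle2 hle1

end StanleyAux

open StanleyAux Set


/-- For a connected graph `G` on `{0, …, n}`, `n! · Vol(Π_G)` counts the pairs `(h, σ)`
with `h ∈ ℤ^n`, `σ ∈ 𝔖_n` such that `π(h, σ) ⊆ Π_G`. -/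
theorem volume_PiG_eq_card_subpolytopes (n : ℕ) (G : SimpleGraph (Fin (n + 1)))
    (hG : G.Connected) :
    (n.factorial : ENNReal) * MeasureTheory.volume (PiG n G)
      = Set.ncard {p : (Fin n → ℤ) × Equiv.Perm (Fin n) | piPoly n p.1 p.2 ⊆ PiG n G} := by
  classical
  set T : Set ((Fin n → ℤ) × Equiv.Perm (Fin n)) := {p | Sset n p.1 p.2 ⊆ PiG n G} with hT
  have hTeq : {p : (Fin n → ℤ) × Equiv.Perm (Fin n) | piPoly n p.1 p.2 ⊆ PiG n G} = T := by
    ext p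
    simp only [mem_setOf_eq, hT, piPoly_eq]
    exact ⟨fun hsub => subset_closure.trans hsub,
      fun hsub => closure_minimal hsub (isClosed_PiG G)⟩
  have hvol : volume (PiG n G) = ∑' (_ : T), volume (Sset n 0 1) := by
    have hsub1 : PiG n G ⊆ Nbad n ∪ ⋃ p ∈ T, Sset n p.1 p.2 := by
      intro x hx
      by_cases hxN : x ∈ Nbad n
      · exact Or.inl hxN
      · right
        have hmem := mem_Sset_of_not_bad hxN
        have hmemT : ((fun i => ⌊x i⌋), (Tuple.sort fun i => Int.fract (x i))⁻¹) ∈ T :=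
          fun y hy => all_or_nothing hmem hy hx
        exact mem_biUnion hmemT hmem
    have hsub2 : (⋃ p ∈ T, Sset n p.1 p.2) ⊆ PiG n G := iUnion₂_subset fun p hp => hp
    have hUvol : volume (⋃ p ∈ T, Sset n p.1 p.2) = ∑' (_ : T), volume (Sset n 0 1) := by
      rw [measure_biUnion T.to_countable (fun p _ q _ hpq => Sset_disjoint hpq)
        fun p _ => measurableSet_Sset _ _]
      exact tsum_congr fun p => volume_Sset _ _
    refine le_antisymm ?_ ?_
    · calc volume (PiG n G) ≤ volume (Nbad n ∪ ⋃ p ∈ T, Sset n p.1 p.2) :=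
            measure_mono hsub1
        _ ≤ volume (Nbad n) + volume (⋃ p ∈ T, Sset n p.1 p.2) := measure_union_le _ _
        _ = ∑' (_ : T), volume (Sset n 0 1) := by rw [volume_Nbad, zero_add, hUvol]
    · rw [← hUvol]
      exact measure_mono hsub2
  have hv1 : (n.factorial : ENNReal) * volume (Sset n 0 1) = 1 := factorial_mul_v
  have hvne : volume (Sset n 0 1) ≠ 0 := by
    intro h0
    rw [h0, mul_zero] at hv1
    exact zero_ne_one hv1
  have hfin : T.Finite := by
    by_contra hinf
    haveI := Set.Infinite.to_subtype hinf
    have htop : volume (PiG n G) = ⊤ := by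
      rw [hvol, ENNReal.tsum_const_eq_top_of_ne_zero hvne]
    exact (volume_PiG_lt_top hG).ne htop
  haveI := hfin.fintype
  have hcard : ∑' (_ : T), volume (Sset n 0 1)
      = (Nat.card T : ENNReal) * volume (Sset n 0 1) := by
    rw [tsum_fintype, Finset.sum_const, Finset.card_univ, Nat.card_eq_fintype_card, nsmul_eq_mul]
  rw [hvol, hcard, hTeq, ← Nat.card_coe_set_eq, mul_left_comm, hv1, mul_one]
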